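/- Let A be self-adjoint and L a finite-dimensional subspace of dom(A). If z ∈ spec₂(A, L), then the closed real interval [Re(z) − |Im(z)|, Re(z) + |Im(z)|] intersects spec(A). -/

import Mathlib

open Set

open Pointwise in
private theorem second_order_aux {H : Type*} [NormedAddCommGroup H] [InnerProductSpace ℂ H] [CompleteSpace H]
    (A : H →L[ℂ] H) (hA : IsSelfAdjoint A) (u : H) (z : ℂ)
    (h0 : (inner ℂ (A u - z • u) (A u - (starRingEnd ℂ z) • u) : ℂ) = 0) :
    ‖A u - (z.re : ℂ) • u‖^2 = z.im^2 * ‖u‖^2 := by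
  have hsym : (inner ℂ (A u) u : ℂ) = inner ℂ u (A u) := hA.isSymmetric u u
  simp only [inner_sub_left, inner_sub_right, inner_smul_left, inner_smul_right, hsym] at h0
  set p : ℂ := inner ℂ u (A u) with hp
  have hpim : p.im = 0 := by
    have h1 : (starRingEnd ℂ) p = p := by rw [hp, inner_conj_symm, hsym]
    have := congrArg Complex.im h1
    simp at this; linarith
  have hAA : (inner ℂ (A u) (A u) : ℂ) = (‖A u‖^2 : ℝ) := by
    rw [inner_self_eq_norm_sq_to_K]; norm_num
  have huu : (inner ℂ u u : ℂ) = (‖u‖^2 : ℝ) := by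
    rw [inner_self_eq_norm_sq_to_K]; norm_num
  rw [hAA, huu] at h0
  have hre := congrArg Complex.re h0
  simp only [Complex.mul_re, Complex.mul_im, Complex.sub_re, Complex.sub_im,
    Complex.ofReal_re, Complex.ofReal_im, Complex.conj_re, Complex.conj_im,
    Complex.zero_re, hpim] at hre
  have hg : ‖A u - (z.re : ℂ) • u‖^2 = ‖A u‖^2 - 2 * (z.re * p.re) + z.re^2 * ‖u‖^2 := by
    rw [@norm_sub_sq ℂ]
    simp only [inner_smul_right, hsym, ← hp, RCLike.re_to_complex, Complex.mul_re,
      Complex.ofReal_re, Complex.ofReal_im, hpim, norm_smul, Complex.norm_real,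
      Real.norm_eq_abs, mul_pow, sq_abs]
    ring
  rw [hg]; nlinarith [hre]

open Pointwise in
/-- if `A` is self-adjoint, `L` a finite-dimensional subspace, and
`z` lies in the second order spectrum of `A` relative to `L`, then the closed interval
`[Re z - |Im z|, Re z + |Im z|]` intersects the spectrum of `A`. -/
theorem second_order_spectrum_encloses_spectrum
    {H : Type*} [NormedAddCommGroup H] [InnerProductSpace ℂ H] [CompleteSpace H]
    (A : H →L[ℂ] H) (hA : IsSelfAdjoint A)
    (L : Submodule ℂ H) (hL : FiniteDimensional ℂ L)
    (z : ℂ)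
    (hz : ∃ u ∈ L, u ≠ 0 ∧ ∀ v ∈ L,
      (inner ℂ (A u - z • u) (A v - (starRingEnd ℂ z) • v) : ℂ) = 0) :
    ∃ x : ℝ, x ∈ Icc (z.re - |z.im|) (z.re + |z.im|) ∧ (x : ℂ) ∈ spectrum ℂ A := by
  obtain ⟨u, huL, hu0, horth⟩ := hz
  have key := second_order_aux A hA u z (horth u huL)
  by_contra hcon
  push_neg at hcon
  haveI : Nontrivial H := nontrivial_of_ne u 0 hu0
  have hmemIcc : z.re ∈ Icc (z.re - |z.im|) (z.re + |z.im|) := by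
    constructor <;> [linarith [abs_nonneg z.im]; linarith [abs_nonneg z.im]]
  have hanot : ((z.re : ℝ) : ℂ) ∉ spectrum ℂ A := hcon z.re hmemIcc
  rw [spectrum.notMem_iff] at hanot
  set B : H →L[ℂ] H := algebraMap ℂ (H →L[ℂ] H) (z.re : ℂ) - A with hBdef
  -- B applied
  have hBapp : ∀ x : H, B x = (z.re : ℂ) • x - A x := by
    intro x
    simp [hBdef, Algebra.algebraMap_eq_smul_one, ContinuousLinearMap.sub_apply,
      ContinuousLinearMap.smul_apply, ContinuousLinearMap.one_apply]
  have hnormBu : ‖B u‖ = |z.im| * ‖u‖ := by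
    have h1 : ‖B u‖^2 = z.im^2 * ‖u‖^2 := by
      rw [hBapp]
      rw [← key, ← norm_neg]
      congr 1
      abel
    have := congrArg Real.sqrt h1
    rwa [Real.sqrt_sq (norm_nonneg _), Real.sqrt_mul (sq_nonneg _),
      Real.sqrt_sq_eq_abs, Real.sqrt_sq (norm_nonneg _)] at this
  -- case z.im = 0
  rcases eq_or_ne z.im 0 with him | him
  · have hBu0 : B u = 0 := by
      have : ‖B u‖ = 0 := by rw [hnormBu, him]; simp
      simpa using this
    obtain ⟨Bu, hBu⟩ := hanot
    have : u = 0 := by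
      have h2 : (↑Bu⁻¹ * ↑Bu : H →L[ℂ] H) u = u := by
        rw [Bu.inv_mul]; simp
      rw [ContinuousLinearMap.mul_apply, hBu, hBu0, map_zero] at h2
      exact h2.symm
    exact hu0 this
  -- case z.im ≠ 0
  have hb : (0:ℝ) < |z.im| := abs_pos.mpr him
  have hu : (0:ℝ) < ‖u‖ := norm_pos_iff.mpr hu0
  obtain ⟨Bu, hBu⟩ := hanot
  -- B is self-adjoint
  have hBsa : IsSelfAdjoint B := by
    rw [IsSelfAdjoint, hBdef, star_sub, hA.star_eq, ← algebraMap_star_comm]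
    norm_num [Complex.conj_ofReal]
  -- inverse is self-adjoint
  have hBinv_sa : IsSelfAdjoint ((↑Bu⁻¹ : H →L[ℂ] H)) := by
    have h1 : star ((↑Bu⁻¹ : H →L[ℂ] H)) * B = 1 := by
      have := congrArg star Bu.mul_inv
      rwa [star_mul, star_one, hBu, hBsa.star_eq] at this
    have h2 : B * star ((↑Bu⁻¹ : H →L[ℂ] H)) = 1 := by
      have := congrArg star Bu.inv_mul
      rwa [star_mul, star_one, hBu, hBsa.star_eq] at this
    calc star ((↑Bu⁻¹ : H →L[ℂ] H))
        = star ((↑Bu⁻¹ : H →L[ℂ] H)) * (↑Bu * ↑Bu⁻¹) := by rw [Bu.mul_inv, mul_one]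
      _ = (star ((↑Bu⁻¹ : H →L[ℂ] H)) * B) * ↑Bu⁻¹ := by rw [hBu, mul_assoc]
      _ = ↑Bu⁻¹ := by rw [h1, one_mul]
  -- every element of spectrum of Bu⁻¹ is small
  have hball : ∀ k ∈ spectrum ℂ ((↑Bu⁻¹ : H →L[ℂ] H)), ‖k‖₊ < (Real.toNNReal |z.im|)⁻¹ := by
    intro k hk
    have hk0 : k ≠ 0 := by
      intro h
      rw [h] at hk
      exact (spectrum.zero_notMem_iff ℂ).mpr (Bu⁻¹).isUnit hk
    have hkinv : (↑(Units.mk0 k hk0)⁻¹ : ℂ) ∈ spectrum ℂ ((↑(Bu⁻¹)⁻¹ : H →L[ℂ] H)) :=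
      spectrum.inv_mem_iff.mp (by simpa using hk)
    rw [inv_inv] at hkinv
    have hkinv' : k⁻¹ ∈ spectrum ℂ B := by simpa [hBu] using hkinv
    -- spectrum of B = z.re - spectrum A
    have hshift : k⁻¹ ∈ ({((z.re:ℝ):ℂ)} : Set ℂ) - spectrum ℂ A := by
      rw [spectrum.singleton_sub_eq]; exact hkinv'
    obtain ⟨c, hc, w, hw, hcw⟩ := hshift
    rw [mem_singleton_iff] at hc
    subst hc
    have hwre : w = ((w.re : ℝ) : ℂ) := hA.mem_spectrum_eq_re hw
    have hwnot : w.re ∉ Icc (z.re - |z.im|) (z.re + |z.im|) := by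
      intro hmem
      exact hcon w.re hmem (hwre ▸ hw)
    rw [mem_Icc, not_and_or, not_le, not_le] at hwnot
    have habs : |z.im| < |w.re - z.re| := by
      have h0 : (0:ℝ) ≤ |z.im| := abs_nonneg _
      rcases hwnot with h | h
      · have hlt : (0:ℝ) < z.re - w.re := by linarith
        rw [abs_sub_comm, abs_of_pos hlt]; linarith
      · have hlt : (0:ℝ) < w.re - z.re := by linarith
        rw [abs_of_pos hlt]; linarith
    -- compute norm of k
    have hkinv_val : k⁻¹ = (((z.re - w.re : ℝ)) : ℂ) := by
      have h1 : k⁻¹ = (z.re : ℂ) - w := hcw.symm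
      rw [h1, hwre]
      simp only [Complex.ofReal_re]
      push_cast
      ring
    have hnk : ‖k‖ < |z.im|⁻¹ := by
      have h1 : ‖k⁻¹‖ = |z.re - w.re| := by
        rw [hkinv_val, Complex.norm_real, Real.norm_eq_abs]
      have h2 : |z.im| < ‖k⁻¹‖ := by rw [h1, abs_sub_comm]; exact habs
      rw [norm_inv] at h2
      have hknorm : (0:ℝ) < ‖k‖ := norm_pos_iff.mpr hk0
      rw [← inv_inv ‖k‖]
      exact inv_strictAnti₀ hb h2
    rw [← NNReal.coe_lt_coe]
    push_cast
    simpa using hnk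
  -- spectral radius bound
  have hne : (spectrum ℂ ((↑Bu⁻¹ : H →L[ℂ] H))).Nonempty := spectrum.nonempty _
  have hrad := spectrum.spectralRadius_lt_of_forall_lt_of_nonempty hne hball
  rw [hBinv_sa.spectralRadius_eq_nnnorm, ENNReal.coe_lt_coe] at hrad
  have hnorminv : ‖(↑Bu⁻¹ : H →L[ℂ] H)‖ < |z.im|⁻¹ := by
    rw [← NNReal.coe_lt_coe] at hrad
    simpa using hrad
  -- final contradiction
  have hfinal : ‖u‖ ≤ ‖(↑Bu⁻¹ : H →L[ℂ] H)‖ * ‖B u‖ := by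
    have h2 : (↑Bu⁻¹ * ↑Bu : H →L[ℂ] H) u = u := by rw [Bu.inv_mul]; simp
    rw [ContinuousLinearMap.mul_apply, hBu] at h2
    calc ‖u‖ = ‖(↑Bu⁻¹ : H →L[ℂ] H) (B u)‖ := by rw [h2]
      _ ≤ ‖(↑Bu⁻¹ : H →L[ℂ] H)‖ * ‖B u‖ := ContinuousLinearMap.le_opNorm _ _
  rw [hnormBu] at hfinal
  have : ‖u‖ < |z.im|⁻¹ * (|z.im| * ‖u‖) := by
    calc ‖u‖ ≤ ‖(↑Bu⁻¹ : H →L[ℂ] H)‖ * (|z.im| * ‖u‖) := hfinal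
      _ < |z.im|⁻¹ * (|z.im| * ‖u‖) := by
          apply mul_lt_mul_of_pos_right hnorminv
          positivity
  rw [← mul_assoc, inv_mul_cancel₀ (ne_of_gt hb), one_mul] at this
  exact lt_irrefl _ this
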